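/- Let K be a p-adic field with Haar measure μ normalized so μ(𝒪_K) = 1, and let C = {x ∈ K : α < ord(x − c) < β ∧ x − c ∈ λQ_{n,m}} be a 1-cell with c ∈ K, λ ∈ Kˣ, α < β ∈ ℤ ∪ {±∞}. Then μ(C) = ∑_{γ} q_K^{-(γ+m)} where γ ranges over {γ ∈ ℤ : α < γ < β, γ ≡ ord(λ) mod n}; in particular, if β = ∞ and α ≥ some integer, μ(C) is a finite geometric-type sum equal to a rational multiple of q_K^{-α}. -/

import Mathlib

open MeasureTheory

/-- The set `Q_{n,m} = {y ∈ Kˣ : n ∣ ord(y), ac_m(y) = 1}` inside `K = ℚ_p`. -/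
def QSet (p : ℕ) [Fact p.Prime] (n m : ℕ) : Set ℚ_[p] :=
  {y : ℚ_[p] | y ≠ 0 ∧ (n : ℤ) ∣ y.valuation ∧
    ‖y * (p : ℚ_[p]) ^ (-y.valuation) - 1‖ ≤ (p : ℝ) ^ (-(m : ℤ))}

namespace Stmt14Aux

variable {p : ℕ} [Fact p.Prime]

lemma ball_meas_set [MeasurableSpace ℚ_[p]] [BorelSpace ℚ_[p]] (a : ℚ_[p]) (r : ℝ) :
    MeasurableSet {x : ℚ_[p] | ‖x - a‖ ≤ r} := by
  have : IsClosed {x : ℚ_[p] | ‖x - a‖ ≤ r} :=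
    isClosed_le (by fun_prop) continuous_const
  exact this.measurableSet

lemma cover (k : ℤ) :
    {x : ℚ_[p] | ‖x‖ ≤ (p:ℝ)^(-k)} =
      ⋃ i ∈ Finset.range p, {x : ℚ_[p] | ‖x - (i:ℚ_[p]) * (p:ℚ_[p])^k‖ ≤ (p:ℝ)^(-(k+1))} := by
  have hp1 : (1:ℝ) < p := by exact_mod_cast (Fact.out : p.Prime).one_lt
  have hp0 : (0:ℝ) < p := by positivity
  have hpk : ((p:ℚ_[p])^k) ≠ 0 := by
    apply zpow_ne_zero
    exact_mod_cast (Fact.out : p.Prime).ne_zero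
  ext x
  simp only [Set.mem_setOf_eq, Set.mem_iUnion, Finset.mem_range, exists_prop]
  constructor
  · intro hx
    have hy : ‖x * (p:ℚ_[p])^(-k)‖ ≤ 1 := by
      rw [norm_mul, norm_zpow, Padic.norm_p]
      calc ‖x‖ * ((p:ℝ)⁻¹)^(-k) ≤ (p:ℝ)^(-k) * ((p:ℝ)⁻¹)^(-k) := by
            apply mul_le_mul_of_nonneg_right hx; positivity
        _ = 1 := by rw [← mul_zpow]; simp [mul_inv_cancel₀ (ne_of_gt hp0)]
    set z : ℤ_[p] := ⟨x * (p:ℚ_[p])^(-k), hy⟩ with hz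
    refine ⟨z.appr 1, by simpa using z.appr_lt 1, ?_⟩
    have hspec := z.appr_spec 1
    rw [Ideal.mem_span_singleton] at hspec
    obtain ⟨t, ht⟩ := hspec
    have hnorm : ‖z - (z.appr 1 : ℤ_[p])‖ ≤ (p:ℝ)^(-(1:ℤ)) := by
      rw [ht]
      calc ‖(p:ℤ_[p])^1 * t‖ ≤ ‖(p:ℤ_[p])^1‖ * 1 := by
            rw [norm_mul]; exact mul_le_mul_of_nonneg_left t.norm_le_one (norm_nonneg _)
        _ = (p:ℝ)^(-(1:ℤ)) := by simp [PadicInt.norm_p]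
    have key : ‖x * (p:ℚ_[p])^(-k) - (z.appr 1 : ℚ_[p])‖ ≤ (p:ℝ)^(-(1:ℤ)) := by
      have hc : ((z - (z.appr 1 : ℤ_[p]) : ℤ_[p]) : ℚ_[p]) = x * (p:ℚ_[p])^(-k) - (z.appr 1 : ℚ_[p]) := by
        push_cast [hz]
        rfl
      calc ‖x * (p:ℚ_[p])^(-k) - (z.appr 1 : ℚ_[p])‖
          = ‖((z - (z.appr 1 : ℤ_[p]) : ℤ_[p]) : ℚ_[p])‖ := by rw [hc]
        _ = ‖z - (z.appr 1 : ℤ_[p])‖ := PadicInt.norm_def.symm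
        _ ≤ (p:ℝ)^(-(1:ℤ)) := hnorm
    have hmain : ‖(x * (p:ℚ_[p])^(-k) - (z.appr 1 : ℚ_[p])) * (p:ℚ_[p])^k‖ ≤ (p:ℝ)^(-(1:ℤ)) * (p:ℝ)^(-k) := by
      rw [norm_mul, norm_zpow, Padic.norm_p]
      apply mul_le_mul key
      · simp [zpow_neg, inv_zpow]
      · positivity
      · positivity
    calc ‖x - (z.appr 1 : ℚ_[p]) * (p:ℚ_[p])^k‖
        = ‖(x * (p:ℚ_[p])^(-k) - (z.appr 1 : ℚ_[p])) * (p:ℚ_[p])^k‖ := by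
          congr 1
          rw [sub_mul, zpow_neg, mul_assoc, inv_mul_cancel₀ hpk, mul_one]
      _ ≤ (p:ℝ)^(-(1:ℤ)) * (p:ℝ)^(-k) := hmain
      _ = (p:ℝ)^(-(k+1)) := by rw [← zpow_add₀ (ne_of_gt hp0)]; ring_nf
  · rintro ⟨i, hi, hx⟩
    have h2 : ‖(i:ℚ_[p]) * (p:ℚ_[p])^k‖ ≤ (p:ℝ)^(-k) := by
      rw [norm_mul, norm_zpow, Padic.norm_p]
      calc ‖(i:ℚ_[p])‖ * ((p:ℝ)⁻¹)^k ≤ 1 * ((p:ℝ)⁻¹)^k := by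
            apply mul_le_mul_of_nonneg_right _ (by positivity)
            exact_mod_cast Padic.norm_int_le_one (i:ℤ)
        _ = (p:ℝ)^(-k) := by simp [zpow_neg, inv_zpow]
    calc ‖x‖ = ‖(x - (i:ℚ_[p]) * (p:ℚ_[p])^k) + (i:ℚ_[p]) * (p:ℚ_[p])^k‖ := by ring_nf
      _ ≤ max ‖x - (i:ℚ_[p]) * (p:ℚ_[p])^k‖ ‖(i:ℚ_[p]) * (p:ℚ_[p])^k‖ := Padic.nonarchimedean _ _
      _ ≤ (p:ℝ)^(-k) := by
          apply max_le _ h2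
          refine le_trans hx (zpow_le_zpow_right₀ hp1.le (by omega))

lemma translate_meas [MeasurableSpace ℚ_[p]] [BorelSpace ℚ_[p]] (μ : Measure ℚ_[p])
    [μ.IsAddLeftInvariant] (a : ℚ_[p]) (r : ℝ) :
    μ {x : ℚ_[p] | ‖x - a‖ ≤ r} = μ {x : ℚ_[p] | ‖x‖ ≤ r} := by
  have : {x : ℚ_[p] | ‖x - a‖ ≤ r} = (fun x => -a + x)⁻¹' {x : ℚ_[p] | ‖x‖ ≤ r} := by
    ext x; simp [neg_add_eq_sub]
  rw [this, measure_preimage_add]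

lemma step [MeasurableSpace ℚ_[p]] [BorelSpace ℚ_[p]] (μ : Measure ℚ_[p])
    [μ.IsAddLeftInvariant] (k : ℤ) :
    μ {x : ℚ_[p] | ‖x‖ ≤ (p:ℝ)^(-k)} = p * μ {x : ℚ_[p] | ‖x‖ ≤ (p:ℝ)^(-(k+1))} := by
  have hp1 : (1:ℝ) < p := by exact_mod_cast (Fact.out : p.Prime).one_lt
  have hp0 : (0:ℝ) < p := by positivity
  rw [cover]
  rw [measure_biUnion_finset ?_ (fun i _ => ball_meas_set _ _)]
  · have : ∀ i ∈ Finset.range p,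
        μ {x : ℚ_[p] | ‖x - (i:ℚ_[p]) * (p:ℚ_[p])^k‖ ≤ (p:ℝ)^(-(k+1))}
          = μ {x : ℚ_[p] | ‖x‖ ≤ (p:ℝ)^(-(k+1))} := fun i _ => translate_meas μ _ _
    rw [Finset.sum_congr rfl this, Finset.sum_const, Finset.card_range, nsmul_eq_mul]
  · intro i hi j hj hij
    simp only [Finset.mem_coe, Finset.mem_range] at hi hj
    rw [Function.onFun, Set.disjoint_left]
    intro x hx hx'
    simp only [Set.mem_setOf_eq] at hx hx'
    have hne : ((i:ℤ) - j) ≠ 0 := by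
      intro h; apply hij; exact_mod_cast sub_eq_zero.mp h
    have hnd : ¬ ((p:ℤ) ∣ ((i:ℤ) - j)) := by
      intro h
      have h1 : (p:ℤ) ∣ |(i:ℤ) - j| := (dvd_abs _ _).mpr h
      have h2 := Int.le_of_dvd (abs_pos.mpr hne) h1
      have hb : |(i:ℤ) - j| < p := by
        rw [abs_lt]; omega
      omega
    have hnorm1 : ‖(((i:ℤ) - j : ℤ) : ℚ_[p])‖ = 1 := by
      rcases lt_or_eq_of_le (Padic.norm_int_le_one (p := p) ((i:ℤ) - j)) with h | h
      · exact absurd (Padic.norm_intCast_lt_one_iff.mp h) hnd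
      · exact h
    have hdiff : ‖((i:ℚ_[p]) - j) * (p:ℚ_[p])^k‖ = (p:ℝ)^(-k) := by
      rw [norm_mul, norm_zpow, Padic.norm_p]
      have : ((i:ℚ_[p]) - j) = (((i:ℤ) - j : ℤ) : ℚ_[p]) := by push_cast; ring
      rw [this, hnorm1, one_mul, inv_zpow, ← zpow_neg]
    have hle : ‖((i:ℚ_[p]) - j) * (p:ℚ_[p])^k‖ ≤ (p:ℝ)^(-(k+1)) := by
      have h4 : ((i:ℚ_[p]) - j) * (p:ℚ_[p])^k
          = (x - (j:ℚ_[p]) * (p:ℚ_[p])^k) - (x - (i:ℚ_[p]) * (p:ℚ_[p])^k) := by ring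
      rw [h4]
      have h3 : (x - (j:ℚ_[p]) * (p:ℚ_[p])^k) - (x - (i:ℚ_[p]) * (p:ℚ_[p])^k)
          = (x - (j:ℚ_[p]) * (p:ℚ_[p])^k) + (-(x - (i:ℚ_[p]) * (p:ℚ_[p])^k)) := by ring
      rw [h3]
      refine le_trans (Padic.nonarchimedean _ _) ?_
      rw [norm_neg]
      exact max_le hx' hx
    rw [hdiff] at hle
    have : (-(k:ℤ)) ≤ -(k+1) := by
      exact_mod_cast (zpow_le_zpow_iff_right₀ hp1).mp hle
    omega

lemma ball_meas [MeasurableSpace ℚ_[p]] [BorelSpace ℚ_[p]] (μ : Measure ℚ_[p])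
    [μ.IsAddLeftInvariant] (hμ : μ {x : ℚ_[p] | ‖x‖ ≤ 1} = 1) (k : ℤ) :
    μ {x : ℚ_[p] | ‖x‖ ≤ (p:ℝ)^(-k)} = (p:ENNReal)^(-k) := by
  have hp0 : (p:ENNReal) ≠ 0 := by exact_mod_cast (Fact.out : p.Prime).ne_zero
  have hpt : (p:ENNReal) ≠ ⊤ := ENNReal.natCast_ne_top p
  set f : ℤ → ENNReal := fun k => μ {x : ℚ_[p] | ‖x‖ ≤ (p:ℝ)^(-k)} with hf
  have hstep : ∀ k : ℤ, f k * (p:ENNReal)^k = f (k+1) * (p:ENNReal)^(k+1) := by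
    intro k
    rw [hf]
    simp only
    rw [step μ k, ENNReal.zpow_add hp0 hpt, zpow_one]
    ring
  have hconst : ∀ k : ℤ, f k * (p:ENNReal)^k = 1 := by
    have h0 : f 0 * (p:ENNReal)^(0:ℤ) = 1 := by
      rw [hf]
      simp only [zpow_zero, mul_one, neg_zero]
      exact hμ
    intro k
    induction k using Int.induction_on with
    | zero => exact h0
    | succ i ih => rw [← hstep]; exact ih
    | pred i ih => rw [hstep, show (-(i:ℤ) - 1 + 1) = -(i:ℤ) by ring]; exact ih
  have := hconst k
  have h2 : f k * (p:ENNReal)^k * (p:ENNReal)^(-k) = (p:ENNReal)^(-k) := by rw [this, one_mul]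
  rwa [mul_assoc, ← ENNReal.zpow_add hp0 hpt, add_neg_cancel, zpow_zero, mul_one] at h2

lemma val_eq_of_norm {w : ℚ_[p]} (hw : w ≠ 0) {γ : ℤ} (h : ‖w‖ = (p:ℝ)^(-γ)) :
    w.valuation = γ := by
  have hp1 : (1:ℝ) < p := by exact_mod_cast (Fact.out : p.Prime).one_lt
  rw [Padic.norm_eq_zpow_neg_valuation hw] at h
  have := (zpow_right_inj₀ (by linarith) (by linarith)).mp h
  omega

lemma leaf_iff {n m : ℕ} (hm : 0 < m) (c lam : ℚ_[p]) (hlam : lam ≠ 0) (γ : ℤ)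
    (hγ : (n:ℤ) ∣ (γ - lam.valuation)) (x : ℚ_[p]) :
    ‖x - (c + lam * (p:ℚ_[p])^(γ - lam.valuation))‖ ≤ (p:ℝ)^(-(γ + (m:ℤ))) ↔
      ((x - c).valuation = γ ∧ ∃ z ∈ QSet p n m, x - c = lam * z) := by
  have hp1 : (1:ℝ) < p := by exact_mod_cast (Fact.out : p.Prime).one_lt
  have hp0 : (0:ℝ) < p := by linarith
  have hpq : (p:ℚ_[p]) ≠ 0 := by exact_mod_cast (Fact.out : p.Prime).ne_zero
  set v : ℤ := γ - lam.valuation with hv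
  set u : ℚ_[p] := lam * (p:ℚ_[p])^v with hu
  have hu0 : u ≠ 0 := mul_ne_zero hlam (zpow_ne_zero _ hpq)
  have hunorm : ‖u‖ = (p:ℝ)^(-γ) := by
    rw [hu, norm_mul, norm_zpow, Padic.norm_p, Padic.norm_eq_zpow_neg_valuation hlam,
      inv_zpow, ← zpow_neg, ← zpow_add₀ (ne_of_gt hp0)]
    congr 1
    omega
  constructor
  · intro hball
    have hlt : (p:ℝ)^(-(γ + (m:ℤ))) < (p:ℝ)^(-γ) := by
      apply zpow_lt_zpow_right₀ hp1
      omega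
    have hxc : ‖x - c‖ = (p:ℝ)^(-γ) := by
      have hxcu : x - c = u + (x - (c + u)) := by ring
      rcases eq_or_ne (x - (c + u)) 0 with h0 | h0
      · rw [hxcu, h0, add_zero, hunorm]
      · rw [hxcu]
        have hne : ‖u‖ ≠ ‖x - (c + u)‖ := by
          intro h
          rw [← h] at hball
          rw [hunorm] at hball
          linarith
        rw [Padic.add_eq_max_of_ne hne, hunorm]
        rw [max_eq_left]
        exact hball.trans hlt.le
    have hxc0 : x - c ≠ 0 := by
      intro h
      rw [h, norm_zero] at hxc
      have : (0:ℝ) < (p:ℝ)^(-γ) := by positivity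
      linarith
    have hval : (x - c).valuation = γ := val_eq_of_norm hxc0 hxc
    refine ⟨hval, (x - c) / lam, ?_, by field_simp⟩
    have hz0 : (x - c) / lam ≠ 0 := div_ne_zero hxc0 hlam
    have hxz : x - c = lam * ((x - c) / lam) := by field_simp
    have hzv : ((x - c) / lam).valuation = v := by
      have hmul := Padic.valuation_mul hlam hz0
      rw [← hxz, hval] at hmul
      omega
    refine ⟨hz0, by rw [hzv]; exact hγ, ?_⟩
    have heq : (x - c) / lam * (p:ℚ_[p])^(-((x - c) / lam).valuation) - 1 = (x - (c + u)) / u := by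
      rw [hzv, hu]
      field_simp
      rw [zpow_neg, sub_mul, inv_mul_cancel_right₀ (zpow_ne_zero _ hpq)]
      ring
    rw [heq, norm_div, hunorm, div_le_iff₀ (by positivity)]
    calc ‖x - (c + u)‖ ≤ (p:ℝ)^(-(γ + (m:ℤ))) := hball
      _ = (p:ℝ)^(-(m:ℤ)) * (p:ℝ)^(-γ) := by
          rw [← zpow_add₀ (ne_of_gt hp0)]; congr 1; ring
  · rintro ⟨hval, z, ⟨hz0, hzd, hz3⟩, hxz⟩
    have hxc0 : x - c ≠ 0 := by rw [hxz]; exact mul_ne_zero hlam hz0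
    have hzv : z.valuation = v := by
      have hmul := Padic.valuation_mul hlam hz0
      rw [← hxz, hval] at hmul
      omega
    have heq : x - (c + u) = u * (z * (p:ℚ_[p])^(-z.valuation) - 1) := by
      rw [hzv, hu]
      have : x - (c + lam * (p:ℚ_[p])^v) = (x - c) - lam * (p:ℚ_[p])^v := by ring
      rw [this, hxz]
      rw [mul_sub, mul_one]
      congr 1
      rw [mul_assoc, mul_comm ((p:ℚ_[p])^v) (z * _), mul_assoc z, zpow_neg,
        inv_mul_cancel₀ (zpow_ne_zero _ hpq), mul_one]
    rw [heq, norm_mul, hunorm]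
    calc (p:ℝ)^(-γ) * ‖z * (p:ℚ_[p])^(-z.valuation) - 1‖
        ≤ (p:ℝ)^(-γ) * (p:ℝ)^(-(m:ℤ)) := by
          apply mul_le_mul_of_nonneg_left hz3; positivity
      _ = (p:ℝ)^(-(γ + (m:ℤ))) := by rw [← zpow_add₀ (ne_of_gt hp0)]; congr 1; ring

end Stmt14Aux

open Stmt14Aux in
theorem stmt_14 (p n m : ℕ) [Fact p.Prime] (hn : 0 < n) (hm : 0 < m)
    [MeasurableSpace ℚ_[p]] [BorelSpace ℚ_[p]]
    (μ : Measure ℚ_[p]) [μ.IsAddLeftInvariant]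
    (hμ : μ {x : ℚ_[p] | ‖x‖ ≤ 1} = 1)
    (c lam : ℚ_[p]) (hlam : lam ≠ 0) (α β : ℤ) (hαβ : α < β) :
    μ {x : ℚ_[p] | α < (x - c).valuation ∧ (x - c).valuation < β ∧
        ∃ z ∈ QSet p n m, x - c = lam * z}
      = ∑ γ ∈ (Finset.Ioo α β).filter (fun γ => (n : ℤ) ∣ (γ - lam.valuation)),
          (p : ENNReal) ^ (-(γ + (m : ℤ))) ∧
    μ {x : ℚ_[p] | α < (x - c).valuation ∧ ∃ z ∈ QSet p n m, x - c = lam * z}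
      = ∑' γ : ℤ, if α < γ ∧ (n : ℤ) ∣ (γ - lam.valuation)
          then (p : ENNReal) ^ (-(γ + (m : ℤ))) else 0 := by
  classical
  set Ball : ℤ → Set ℚ_[p] := fun γ =>
    {x : ℚ_[p] | ‖x - (c + lam * (p:ℚ_[p])^(γ - lam.valuation))‖ ≤ (p:ℝ)^(-(γ + (m:ℤ)))} with hBall
  have hBmeas : ∀ γ : ℤ, MeasurableSet (Ball γ) := fun γ => ball_meas_set _ _
  have hBμ : ∀ γ : ℤ, μ (Ball γ) = (p:ENNReal)^(-(γ + (m:ℤ))) := by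
    intro γ
    rw [hBall]
    simp only
    rw [translate_meas μ _ _, ball_meas μ hμ]
  have hmem : ∀ γ : ℤ, (n:ℤ) ∣ (γ - lam.valuation) → ∀ x : ℚ_[p],
      x ∈ Ball γ ↔ ((x - c).valuation = γ ∧ ∃ z ∈ QSet p n m, x - c = lam * z) :=
    fun γ hd x => leaf_iff hm c lam hlam γ hd x
  -- valuation of z forces divisibility
  have hdvd : ∀ x : ℚ_[p], (∃ z ∈ QSet p n m, x - c = lam * z) →
      (n:ℤ) ∣ ((x - c).valuation - lam.valuation) := by
    rintro x ⟨z, ⟨hz0, hzd, _⟩, hxz⟩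
    have hmul := Padic.valuation_mul hlam hz0
    rw [← hxz] at hmul
    have h : (x - c).valuation - lam.valuation = z.valuation := by omega
    rw [h]
    exact hzd
  have hdisj : ∀ γ γ' : ℤ, γ ≠ γ' → (n:ℤ) ∣ (γ - lam.valuation) →
      (n:ℤ) ∣ (γ' - lam.valuation) → Disjoint (Ball γ) (Ball γ') := by
    intro γ γ' hne hd hd'
    rw [Set.disjoint_left]
    intro x hx hx'
    have h1 := ((hmem γ hd x).mp hx).1
    have h2 := ((hmem γ' hd' x).mp hx').1
    exact hne (h1 ▸ h2 ▸ rfl)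
  constructor
  · have hset : {x : ℚ_[p] | α < (x - c).valuation ∧ (x - c).valuation < β ∧
        ∃ z ∈ QSet p n m, x - c = lam * z}
        = ⋃ γ ∈ (Finset.Ioo α β).filter (fun γ => (n : ℤ) ∣ (γ - lam.valuation)), Ball γ := by
      ext x
      simp only [Set.mem_setOf_eq, Set.mem_iUnion, Finset.mem_filter, Finset.mem_Ioo, exists_prop]
      constructor
      · rintro ⟨h1, h2, hz⟩
        have hd := hdvd x hz
        exact ⟨(x - c).valuation, ⟨⟨h1, h2⟩, hd⟩, (hmem _ hd x).mpr ⟨rfl, hz⟩⟩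
      · rintro ⟨γ, ⟨⟨h1, h2⟩, hd⟩, hx⟩
        obtain ⟨hval, hz⟩ := (hmem γ hd x).mp hx
        exact ⟨hval ▸ h1, hval ▸ h2, hz⟩
    rw [hset, measure_biUnion_finset ?_ (fun γ _ => hBmeas γ)]
    · exact Finset.sum_congr rfl fun γ _ => hBμ γ
    · intro γ hγ γ' hγ' hne
      simp only [Finset.mem_coe, Finset.mem_filter, Finset.mem_Ioo] at hγ hγ'
      exact hdisj γ γ' hne hγ.2 hγ'.2
  · set S : ℤ → Set ℚ_[p] := fun γ =>
      if α < γ ∧ (n:ℤ) ∣ (γ - lam.valuation) then Ball γ else ∅ with hS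
    have hset : {x : ℚ_[p] | α < (x - c).valuation ∧ ∃ z ∈ QSet p n m, x - c = lam * z}
        = ⋃ γ : ℤ, S γ := by
      ext x
      simp only [Set.mem_setOf_eq, Set.mem_iUnion, hS]
      constructor
      · rintro ⟨h1, hz⟩
        have hd := hdvd x hz
        refine ⟨(x - c).valuation, ?_⟩
        rw [if_pos ⟨h1, hd⟩]
        exact (hmem _ hd x).mpr ⟨rfl, hz⟩
      · rintro ⟨γ, hx⟩
        by_cases hc : α < γ ∧ (n:ℤ) ∣ (γ - lam.valuation)
        · rw [if_pos hc] at hx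
          obtain ⟨hval, hz⟩ := (hmem γ hc.2 x).mp hx
          exact ⟨hval ▸ hc.1, hz⟩
        · rw [if_neg hc] at hx
          exact absurd hx (Set.notMem_empty x)
    rw [hset, measure_iUnion ?_ ?_]
    · refine tsum_congr fun γ => ?_
      by_cases hc : α < γ ∧ (n:ℤ) ∣ (γ - lam.valuation)
      · rw [hS]; simp only
        rw [if_pos hc, if_pos hc, hBμ γ]
      · rw [hS]; simp only
        rw [if_neg hc, if_neg hc, measure_empty]
    · intro γ γ' hne
      rw [Function.onFun, hS]
      simp only
      by_cases hc : α < γ ∧ (n:ℤ) ∣ (γ - lam.valuation)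
      · by_cases hc' : α < γ' ∧ (n:ℤ) ∣ (γ' - lam.valuation)
        · rw [if_pos hc, if_pos hc']
          exact hdisj γ γ' hne hc.2 hc'.2
        · rw [if_neg hc']; simp
      · rw [if_neg hc]; simp
    · intro γ
      rw [hS]
      simp only
      split
      · exact hBmeas γ
      · exact MeasurableSet.empty
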